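/- For a cartesian closed category C and an object γ, the assignment E₀(a) = (a, ev_{γ,a}, γ^a) and E₁(f : a → b) = (f, f⁻), where f⁻ : γ^b → γ^a is the transpose of ev_{γ,b} ∘ (f × 1_{γ^b}), defines a full and faithful functor from C into Chu(C, γ) that is injective on objects and on arrows. -/

import Mathlib

open CategoryTheory CategoryTheory.Limits MonoidalCategory

universe v u

variable (C : Type u) [Category.{v} C] [CartesianMonoidalCategory C] [MonoidalClosed C]

/-- A Chu space over the ccc `C` and the object `γ`. -/
structure ChuObj (γ : C) : Type (max u v) where
  a : C
  x : C
  f : a ⊗ x ⟶ γ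

variable {C}

/-- A Chu transform. -/
@[ext]
structure ChuHom {γ : C} (A B : ChuObj C γ) : Type v where
  plus : A.a ⟶ B.a
  minus : B.x ⟶ A.x
  comm : (𝟙 A.a ⊗ₘ minus) ≫ A.f = (plus ⊗ₘ 𝟙 B.x) ≫ B.f

/-- The Chu category `Chu(C, γ)`. -/
instance chuCategory {γ : C} : Category (ChuObj C γ) where
  Hom := ChuHom
  id A := ⟨𝟙 A.a, 𝟙 A.x, rfl⟩
  comp φ θ := ⟨φ.plus ≫ θ.plus, θ.minus ≫ φ.minus, by
    calc (𝟙 _ ⊗ₘ θ.minus ≫ φ.minus) ≫ _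
        = (𝟙 _ ⊗ₘ θ.minus) ≫ (𝟙 _ ⊗ₘ φ.minus) ≫ _ := by
          rw [← Category.assoc, MonoidalCategory.tensorHom_comp_tensorHom, Category.comp_id]
      _ = (𝟙 _ ⊗ₘ θ.minus) ≫ (φ.plus ⊗ₘ 𝟙 _) ≫ _ := by rw [φ.comm]
      _ = (φ.plus ⊗ₘ 𝟙 _) ≫ (𝟙 _ ⊗ₘ θ.minus) ≫ _ := by
          rw [← Category.assoc, ← Category.assoc, MonoidalCategory.tensorHom_comp_tensorHom,
            MonoidalCategory.tensorHom_comp_tensorHom, Category.id_comp, Category.comp_id,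
            Category.id_comp, Category.comp_id]
      _ = (φ.plus ⊗ₘ 𝟙 _) ≫ (θ.plus ⊗ₘ 𝟙 _) ≫ _ := by rw [θ.comm]
      _ = ((φ.plus ≫ θ.plus) ⊗ₘ 𝟙 _) ≫ _ := by
          rw [← Category.assoc, MonoidalCategory.tensorHom_comp_tensorHom, Category.comp_id]⟩
  id_comp φ := ChuHom.ext (Category.id_comp _) (Category.comp_id _)
  comp_id φ := ChuHom.ext (Category.comp_id _) (Category.id_comp _)
  assoc φ θ ρ := ChuHom.ext (Category.assoc _ _ _) (Category.assoc _ _ _).symm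

variable {γ : C}

/-- Object part of the Chu representation of the ccc `C`:
`E₀(a) = (a, ev_{γ,a}, γ^a)`. -/
noncomputable def repObj (γ : C) (a : C) : ChuObj C γ :=
  ⟨a, (ihom a).obj γ, (ihom.ev a).app γ⟩

/-- Morphism part: `E₁(f) = (f, f⁻)` where `f⁻ : γ^b → γ^a` is the transpose of
`ev_{γ,b} ∘ (f × 1_{γ^b})`. -/
noncomputable def repHom {a b : C} (f : a ⟶ b) : repObj γ a ⟶ repObj γ b :=
  ⟨f, MonoidalClosed.curry ((f ⊗ₘ 𝟙 ((ihom b).obj γ)) ≫ (ihom.ev b).app γ), by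
    show (𝟙 a ⊗ₘ _) ≫ (ihom.ev a).app γ = _
    rw [MonoidalCategory.id_tensorHom, ← MonoidalClosed.uncurry_eq,
      MonoidalClosed.uncurry_curry]
    rfl⟩

/-- the assignment `E₀(a) = (a, ev_{γ,a}, γ^a)`,
`E₁(f) = (f, f⁻)` defines a functor from `C` into `Chu(C, γ)` that is full
and faithful, and injective on objects and on arrows. -/
theorem repHom_full_embedding (γ : C) :
    (∀ a : C, repHom (γ := γ) (𝟙 a) = 𝟙 (repObj γ a)) ∧
    (∀ {a b c : C} (f : a ⟶ b) (g : b ⟶ c),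
      repHom (γ := γ) (f ≫ g) = repHom (γ := γ) f ≫ repHom (γ := γ) g) ∧
    Function.Injective (repObj (C := C) γ) ∧
    (∀ a b : C, Function.Injective fun f : a ⟶ b => repHom (γ := γ) f) ∧
    (∀ (a b : C) (φ : repObj γ a ⟶ repObj γ b), ∃ f : a ⟶ b, repHom (γ := γ) f = φ) := by
  refine ⟨?_, ?_, ?_, ?_, ?_⟩
  · intro a
    refine ChuHom.ext rfl ?_
    show MonoidalClosed.curry ((𝟙 a ⊗ₘ 𝟙 _) ≫ (ihom.ev a).app γ) = 𝟙 _
    rw [MonoidalCategory.id_tensorHom_id, Category.id_comp, ← MonoidalClosed.uncurry_id_eq_ev,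
      MonoidalClosed.curry_uncurry]
  · intro a b c f g
    refine ChuHom.ext rfl ?_
    show MonoidalClosed.curry (((f ≫ g) ⊗ₘ 𝟙 _) ≫ (ihom.ev c).app γ) = _ ≫ _
    apply MonoidalClosed.uncurry_injective
    rw [MonoidalClosed.uncurry_curry]
    erw [MonoidalClosed.uncurry_natural_left]
    simp only [repHom]
    rw [MonoidalClosed.uncurry_curry]
    have := (repHom (γ := γ) f).comm
    simp only [repObj, repHom] at this ⊢
    rw [MonoidalCategory.id_tensorHom, ← MonoidalClosed.uncurry_eq] at this
    calc ((f ≫ g) ⊗ₘ 𝟙 _) ≫ (ihom.ev c).app γ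
        = (f ⊗ₘ 𝟙 _) ≫ (g ⊗ₘ 𝟙 _) ≫ (ihom.ev c).app γ := by
          rw [← Category.assoc, MonoidalCategory.tensorHom_comp_tensorHom, Category.comp_id]
      _ = (f ⊗ₘ 𝟙 _) ≫ MonoidalClosed.uncurry
            (MonoidalClosed.curry ((g ⊗ₘ 𝟙 _) ≫ (ihom.ev c).app γ)) := by
          rw [MonoidalClosed.uncurry_curry]
      _ = _ := by
          rw [MonoidalClosed.uncurry_eq]
          simp only [Functor.id_obj, Category.id_comp, Category.comp_id,
            MonoidalCategory.id_tensorHom, MonoidalCategory.tensorHom_id]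
          rw [← Category.assoc, ← Category.assoc, MonoidalCategory.whisker_exchange]
  · intro a b h
    exact congrArg ChuObj.a h
  · intro a b f g h
    exact congrArg ChuHom.plus h
  · intro a b φ
    refine ⟨φ.plus, ChuHom.ext rfl ?_⟩
    show MonoidalClosed.curry ((φ.plus ⊗ₘ 𝟙 _) ≫ (ihom.ev b).app γ) = φ.minus
    have := φ.comm
    simp only [repObj] at this
    rw [MonoidalCategory.id_tensorHom, ← MonoidalClosed.uncurry_eq] at this
    have h2 := congrArg MonoidalClosed.curry this
    rw [MonoidalClosed.curry_uncurry] at h2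
    exact h2.symm
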